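/- arXiv:0810.2445 — 2 statements merged into one kernel-verified Lean document; each statement's English description precedes it below -/
import Mathlib

section
/- Define h_m ∈ ℤ[x1,x2] as the coefficient of z^m in (1 - 2x2·z)(1 - (x1+x2)·z)/((1 - x2·z)(1 - 3x1·z)) (with h_m = 0 for m < 0). Then for every integer r ≥ 2, the 2×2 determinant h_r·h_r - h_(r+1)·h_(r-1) equals -3^(r-2)·(x2 - 2x1)·(x1·x2)^(r-1)·(3x1 - 2x2). -/
noncomputable section

abbrev R7 : Type := MvPolynomial (Fin 2) ℤ

def x₁ : R7 := MvPolynomial.X 0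
def x₂ : R7 := MvPolynomial.X 1

/-- Let `h_m` be the coefficient of `z^m` in
`(1-2x2 z)(1-(x1+x2)z)/((1-x2 z)(1-3x1 z))`.  Then for `r ≥ 2`,
`h_r·h_r - h_(r+1)·h_(r-1) = -3^(r-2)·(x2-2x1)·(x1x2)^(r-1)·(3x1-2x2)`. -/
theorem schur_rr_factorization (r : ℕ) (hr : 2 ≤ r)
    (f : PowerSeries R7)
    (hf :
      ((1 - PowerSeries.C x₂ * PowerSeries.X) *
        (1 - PowerSeries.C (3 * x₁) * PowerSeries.X)) * f =
      (1 - PowerSeries.C (2 * x₂) * PowerSeries.X) *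
        (1 - PowerSeries.C (x₁ + x₂) * PowerSeries.X)) :
    (PowerSeries.coeff r f) * (PowerSeries.coeff r f)
        - (PowerSeries.coeff (r+1) f) * (PowerSeries.coeff (r-1) f) =
      -(3:R7) ^ (r-2) * (x₂ - 2 * x₁) * (x₁ * x₂) ^ (r-1) * (3 * x₁ - 2 * x₂) := by
  have hf' : f + PowerSeries.C (x₂ * (3*x₁)) * (PowerSeries.X^2 * f)
      + (PowerSeries.C (2*x₂) + PowerSeries.C (x₁+x₂)) * PowerSeries.X^1
      = 1 + PowerSeries.C ((2*x₂) * (x₁+x₂)) * PowerSeries.X^2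
      + (PowerSeries.C x₂ + PowerSeries.C (3*x₁)) * (PowerSeries.X^1 * f) := by
    have h := hf
    simp only [map_mul, map_add] at h ⊢
    linear_combination h
  have key : ∀ m : ℕ, PowerSeries.coeff m f
      + (x₂*(3*x₁)) * (if 2 ≤ m then PowerSeries.coeff (m-2) f else 0)
      + ((2*x₂) + (x₁+x₂)) * (if m = 1 then 1 else 0)
      = (if m = 0 then 1 else 0) + ((2*x₂)*(x₁+x₂)) * (if m = 2 then 1 else 0)
      + (x₂ + 3*x₁) * (if 1 ≤ m then PowerSeries.coeff (m-1) f else 0) := by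
    intro m
    have h2 := congrArg (PowerSeries.coeff m) hf'
    simp only [map_add, add_mul, PowerSeries.coeff_C_mul, PowerSeries.coeff_X_pow_mul',
      PowerSeries.coeff_one, PowerSeries.coeff_X_pow] at h2
    split_ifs at h2 <;> split_ifs <;> linear_combination h2
  have e0' : PowerSeries.constantCoeff f = 1 := by
    have h := key 0; norm_num at h; linear_combination h
  have e0 : PowerSeries.coeff 0 f = 1 := by
    rw [PowerSeries.coeff_zero_eq_constantCoeff]; exact e0'
  have e1 : PowerSeries.coeff 1 f = 2*x₁ - 2*x₂ := by
    have h := key 1; norm_num [e0, e0'] at h; linear_combination h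
  have e2 : PowerSeries.coeff 2 f = 6*x₁^2 - 5*x₁*x₂ := by
    have h := key 2; norm_num [e0, e0', e1] at h; linear_combination h
  have hrec : ∀ n : ℕ, PowerSeries.coeff (n+3) f
      = (x₂ + 3*x₁) * PowerSeries.coeff (n+2) f
        - (x₂*(3*x₁)) * PowerSeries.coeff (n+1) f := by
    intro n
    have h := key (n+3)
    simp only [show (2 ≤ n+3) from by omega, show (1 ≤ n+3) from by omega,
      show ¬(n+3 = 0) from by omega, show ¬(n+3 = 1) from by omega,
      show ¬(n+3 = 2) from by omega, if_true, if_false,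
      show n+3-2 = n+1 from by omega, show n+3-1 = n+2 from by omega] at h
    linear_combination h
  have e3 : PowerSeries.coeff 3 f = 18*x₁^3 - 15*x₁^2*x₂ + x₁*x₂^2 := by
    have h := hrec 0
    rw [show (0:ℕ)+3 = 3 from rfl, show (0:ℕ)+2 = 2 from rfl, show (0:ℕ)+1 = 1 from rfl,
      e1, e2] at h
    linear_combination h
  have main : ∀ n : ℕ,
      (PowerSeries.coeff (n+2) f) * (PowerSeries.coeff (n+2) f)
        - (PowerSeries.coeff (n+3) f) * (PowerSeries.coeff (n+1) f)
      = -(3:R7) ^ n * (x₂ - 2 * x₁) * (x₁ * x₂) ^ (n+1) * (3 * x₁ - 2 * x₂) := by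
    intro n
    induction n with
    | zero =>
        rw [show (0:ℕ)+2 = 2 from rfl, show (0:ℕ)+3 = 3 from rfl, show (0:ℕ)+1 = 1 from rfl,
          e1, e2, e3]
        ring
    | succ n ih =>
        have r1 := hrec n
        have r2 := hrec (n+1)
        rw [show n+1+3 = n+1+3 from rfl, show n+1+2 = n+3 from by omega,
          show n+1+1 = n+2 from by omega] at r2 ⊢
        rw [show n+1+3 = n+4 from by omega] at r2 ⊢
        linear_combination (x₂*(3*x₁)) * ih
          - (PowerSeries.coeff (n+2) f) * r2
          + (PowerSeries.coeff (n+3) f) * r1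
  obtain ⟨n, rfl⟩ : ∃ n, r = n + 2 := ⟨r - 2, by omega⟩
  have := main n
  rw [show n+2+1 = n+3 from by omega, show n+2-1 = n+1 from by omega,
    show n+2-2 = n from by omega]
  exact this

end
end

section
/- Let 𝔸 have m elements, 𝔹 have n elements, and let I = (i_1 ≤ ... ≤ i_m), J = (j_1 ≤ ... ≤ j_s) be partitions with at most m and s parts respectively. Then the factorization S_{(j_1,...,j_s, i_1+n, ..., i_m+n)}(𝔸 - 𝔹) = S_I(𝔸) · R(𝔸,𝔹) · S_J(-𝔹) holds, where R(𝔸,𝔹) = ∏_{a∈𝔸,b∈𝔹}(a-b), for the case m = 1: namely, for a single variable x, S_{(j_1,...,j_s, i+n)}(x - 𝔹) = x^i · ∏_{b∈𝔹}(x - b) · S_J(-𝔹). -/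
noncomputable section

def Scoef {R : Type*} [CommRing R] (f : PowerSeries R) : ℤ → R :=
  fun k => if k < 0 then 0 else PowerSeries.coeff k.toNat f

/-- The Jacobi–Trudi determinant `S_I = det(S_{i_p+p-q})_{1≤p,q≤s}`. -/
def schurJT {R : Type*} [CommRing R] (f : PowerSeries R) {s : ℕ} (I : Fin s → ℕ) : R :=
  (Matrix.of fun p q : Fin s => Scoef f ((I p : ℤ) + (p : ℤ) - (q : ℤ))).det

section Aux

variable {R : Type*} [CommRing R]

lemma Scoef_of_neg (f : PowerSeries R) {k : ℤ} (hk : k < 0) : Scoef f k = 0 := if_pos hk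

lemma Scoef_natCast (f : PowerSeries R) (k : ℕ) :
    Scoef f (k : ℤ) = PowerSeries.coeff k f := by
  simp [Scoef]

lemma coeff_one_sub_C_mul (a : R) (h : PowerSeries R) (m : ℕ) :
    PowerSeries.coeff m ((1 - PowerSeries.C a * PowerSeries.X) * h) =
      PowerSeries.coeff m h -
        a * (if m = 0 then 0 else PowerSeries.coeff (m - 1) h) := by
  have hh : (1 - PowerSeries.C a * PowerSeries.X) * h =
      h - PowerSeries.C a * (PowerSeries.X * h) := by ring
  rw [hh, map_sub, PowerSeries.coeff_C_mul]
  cases m with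
  | zero => simp [PowerSeries.coeff_zero_X_mul]
  | succ t => simp [PowerSeries.coeff_succ_X_mul]

lemma Scoef_one_sub_mul (a : R) (h : PowerSeries R) (k : ℤ) :
    Scoef ((1 - PowerSeries.C a * PowerSeries.X) * h) k =
      Scoef h k - a * Scoef h (k - 1) := by
  rcases lt_or_ge k 0 with hk | hk
  · rw [Scoef_of_neg _ hk, Scoef_of_neg _ hk, Scoef_of_neg _ (by omega), mul_zero, sub_zero]
  · lift k to ℕ using hk
    have h1 : Scoef h ((k : ℤ) - 1) =
        if k = 0 then 0 else PowerSeries.coeff (k - 1) h := by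
      cases k with
      | zero => simp [Scoef_of_neg]
      | succ t =>
        rw [if_neg t.succ_ne_zero,
          show ((t + 1 : ℕ) : ℤ) - 1 = ((t : ℕ) : ℤ) by push_cast; ring, Scoef_natCast]
        simp
    rw [Scoef_natCast, Scoef_natCast, h1, coeff_one_sub_C_mul]

lemma one_sub_mul_mk (a : R) :
    (1 - PowerSeries.C a * PowerSeries.X) * PowerSeries.mk (fun m => a ^ m) = 1 := by
  ext m
  rw [coeff_one_sub_C_mul]
  cases m with
  | zero => simp
  | succ t => simp [pow_succ, mul_comm]

lemma reflect_one_sub (c : R) :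
    Polynomial.reflect 1 (1 - Polynomial.C c * Polynomial.X) =
      Polynomial.X - Polynomial.C c := by
  ext i
  rw [Polynomial.coeff_reflect]
  match i with
  | 0 => simp [Polynomial.revAt_le, Polynomial.coeff_one]
  | 1 => simp [Polynomial.revAt_le, Polynomial.coeff_one]
  | (k + 2) =>
    rw [Polynomial.revAt_eq_self_of_lt (by omega)]
    simp [Polynomial.coeff_X, Polynomial.coeff_C, Polynomial.coeff_one]

lemma natDegree_one_sub_le (c : R) :
    (1 - Polynomial.C c * Polynomial.X).natDegree ≤ 1 := by
  refine (Polynomial.natDegree_sub_le _ _).trans ?_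
  simp only [Polynomial.natDegree_one, max_le_iff]
  exact ⟨zero_le_one, (Polynomial.natDegree_C_mul_le _ _).trans Polynomial.natDegree_X_le⟩

lemma natDegree_prod_one_sub_le {ι : Type*} (t : Finset ι) (b : ι → R) :
    (∏ j ∈ t, (1 - Polynomial.C (b j) * Polynomial.X)).natDegree ≤ t.card := by
  refine (Polynomial.natDegree_prod_le _ _).trans ?_
  have h1 : ∑ j ∈ t, (1 - Polynomial.C (b j) * Polynomial.X).natDegree ≤ ∑ _j ∈ t, (1 : ℕ) :=
    Finset.sum_le_sum fun j _ => natDegree_one_sub_le _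
  simpa using h1

lemma reflect_prod_one_sub {ι : Type*} (t : Finset ι) (b : ι → R) :
    Polynomial.reflect t.card (∏ j ∈ t, (1 - Polynomial.C (b j) * Polynomial.X)) =
      ∏ j ∈ t, (Polynomial.X - Polynomial.C (b j)) := by
  induction t using Finset.cons_induction with
  | empty => simp
  | cons a t ha ih =>
    rw [Finset.prod_cons, Finset.prod_cons, Finset.card_cons, add_comm t.card 1]
    rw [Polynomial.reflect_mul _ _ (natDegree_one_sub_le _) (natDegree_prod_one_sub_le t b),
      ih, reflect_one_sub]

theorem main_aux (n s i : ℕ) (J : Fin s → ℕ)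
    (x : R) (b : Fin n → R) (f : PowerSeries R)
    (hf : (1 - PowerSeries.C x * PowerSeries.X) * f =
      ∏ j : Fin n, (1 - PowerSeries.C (b j) * PowerSeries.X)) :
    schurJT f (Fin.snoc J (i + n)) =
      x ^ i * (∏ j : Fin n, (x - b j)) *
        schurJT (∏ j : Fin n, (1 - PowerSeries.C (b j) * PowerSeries.X)) J := by
  set g : PowerSeries R := ∏ j : Fin n, (1 - PowerSeries.C (b j) * PowerSeries.X) with hgdef
  set P : R := ∏ j : Fin n, (x - b j) with hPdef
  set gp : Polynomial R := ∏ j : Fin n, (1 - Polynomial.C (b j) * Polynomial.X) with hgp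
  -- coefficients of g are those of gp
  have hcoe : ∀ m : ℕ, PowerSeries.coeff m g = gp.coeff m := by
    intro m
    rw [← Polynomial.coeff_coe, ← Polynomial.coeToPowerSeries.ringHom_apply]
    congr 1
    rw [hgp, map_prod, hgdef]
    simp only [map_sub, map_one, map_mul, Polynomial.coeToPowerSeries.ringHom_apply,
      Polynomial.coe_C, Polynomial.coe_X]
  have hgpdeg : gp.natDegree ≤ n := by
    simpa using natDegree_prod_one_sub_le (Finset.univ : Finset (Fin n)) b
  have hg0 : ∀ k : ℕ, n < k → PowerSeries.coeff k g = 0 := by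
    intro k hk
    rw [hcoe]
    exact Polynomial.coeff_eq_zero_of_natDegree_lt (lt_of_le_of_lt hgpdeg hk)
  have hrec : ∀ k : ℤ, Scoef g k = Scoef f k - x * Scoef f (k - 1) := by
    intro k
    rw [← hf, Scoef_one_sub_mul]
  have hmk : f = PowerSeries.mk (fun m => x ^ m) * g := by
    calc f = (PowerSeries.mk (fun m => x ^ m) * (1 - PowerSeries.C x * PowerSeries.X)) * f := by
          rw [mul_comm (PowerSeries.mk _), one_sub_mul_mk, one_mul]
      _ = PowerSeries.mk (fun m => x ^ m) * ((1 - PowerSeries.C x * PowerSeries.X) * f) := by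
          ring
      _ = PowerSeries.mk (fun m => x ^ m) * g := by rw [hf]
  -- the key coefficient evaluation
  have hPn : PowerSeries.coeff n f = P := by
    have h1 : PowerSeries.coeff n f = ∑ k ∈ Finset.range (n + 1), x ^ k * gp.coeff (n - k) := by
      rw [hmk, PowerSeries.coeff_mul, Finset.Nat.sum_antidiagonal_eq_sum_range_succ_mk]
      simp [PowerSeries.coeff_mk, hcoe]
    have hH : Polynomial.reflect n gp = ∏ j : Fin n, (Polynomial.X - Polynomial.C (b j)) := by
      have h2 := reflect_prod_one_sub (Finset.univ : Finset (Fin n)) b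
      simpa [hgp] using h2
    have hHdeg : (∏ j : Fin n, (Polynomial.X - Polynomial.C (b j))).natDegree ≤ n := by
      refine (Polynomial.natDegree_prod_le _ _).trans ?_
      have h3 : ∑ j : Fin n, (Polynomial.X - Polynomial.C (b j)).natDegree ≤
          ∑ _j : Fin n, (1 : ℕ) :=
        Finset.sum_le_sum fun j _ => Polynomial.natDegree_X_sub_C_le _
      simpa using h3
    have h2 : (∏ j : Fin n, (Polynomial.X - Polynomial.C (b j))).eval x = P := by
      simp [hPdef, Polynomial.eval_prod]
    rw [h1, ← h2, Polynomial.eval_eq_sum_range' (Nat.lt_succ_of_le hHdeg) x]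
    refine Finset.sum_congr rfl fun k hk => ?_
    rw [← hH, Polynomial.coeff_reflect,
      Polynomial.revAt_le (by simpa using Nat.lt_succ_iff.mp (Finset.mem_range.mp hk))]
    ring
  -- values of Scoef f above n
  have hform : ∀ t : ℕ, Scoef f ((n : ℤ) + t) = x ^ t * P := by
    intro t
    induction t with
    | zero => simpa [Scoef_natCast] using hPn
    | succ t ih =>
      have hg0' : Scoef g ((n : ℤ) + (t + 1 : ℕ)) = 0 := by
        rw [show ((n : ℤ) + (t + 1 : ℕ)) = ((n + (t + 1) : ℕ) : ℤ) by push_cast; ring,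
          Scoef_natCast]
        exact hg0 _ (by omega)
      have h4 := hrec ((n : ℤ) + (t + 1 : ℕ))
      rw [hg0', show (n : ℤ) + (t + 1 : ℕ) - 1 = (n : ℤ) + t by push_cast; ring] at h4
      have h5 : Scoef f ((n : ℤ) + (t + 1 : ℕ)) = x * Scoef f ((n : ℤ) + t) := by
        linear_combination -h4
      rw [h5, ih, pow_succ]
      ring
  have hformZ : ∀ k : ℤ, (n : ℤ) ≤ k → Scoef f k = x ^ (k - n).toNat * P := by
    intro k hk
    obtain ⟨t, ht⟩ : ∃ t : ℕ, k = (n : ℤ) + t := ⟨(k - n).toNat, by omega⟩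
    subst ht
    rw [hform t]
    congr 2
    omega
  -- matrices
  set K : Fin (s + 1) → ℕ := Fin.snoc J (i + n) with hK
  set M : Matrix (Fin (s + 1)) (Fin (s + 1)) R :=
    Matrix.of fun p q : Fin (s + 1) =>
      Scoef f ((K p : ℤ) + (p : ℤ) - (q : ℤ)) with hM
  have hLHS : schurJT f (Fin.snoc J (i + n)) = M.det := rfl
  set E : Matrix (Fin (s + 1)) (Fin (s + 1)) R :=
    Matrix.of fun r q : Fin (s + 1) =>
      (if r = q then (1 : R) else 0) + (if (r : ℕ) = (q : ℕ) + 1 then -x else 0) with hE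
  have hEdet : E.det = 1 := by
    rw [Matrix.det_of_lowerTriangular E ?_]
    · rw [Finset.prod_eq_one]
      intro q _
      simp [hE]
    · intro p q hpq
      have h1 : (p : ℕ) < (q : ℕ) := hpq
      have h2 : p ≠ q := by
        intro h; rw [h] at h1; omega
      simp only [hE, Matrix.of_apply, if_neg h2, if_neg (by omega : ¬ (p : ℕ) = (q : ℕ) + 1)]
      ring
  have hME : ∀ p q : Fin (s + 1), (M * E) p q =
      M p q + (if h : (q : ℕ) + 1 < s + 1 then M p ⟨(q : ℕ) + 1, h⟩ * (-x) else 0) := by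
    intro p q
    rw [Matrix.mul_apply]
    have hterm : ∀ r : Fin (s + 1), M p r * E r q =
        (if r = q then M p r else 0) + (if (r : ℕ) = (q : ℕ) + 1 then M p r * (-x) else 0) := by
      intro r
      simp only [hE, Matrix.of_apply, mul_add]
      congr 1
      · split_ifs <;> simp
      · split_ifs <;> simp
    rw [Finset.sum_congr rfl fun r _ => hterm r, Finset.sum_add_distrib]
    congr 1
    · simp
    · split_ifs with h
      · rw [Finset.sum_eq_single (⟨(q : ℕ) + 1, h⟩ : Fin (s + 1))]
        · simp
        · intro r _ hr
          rw [if_neg]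
          intro hc
          exact hr (Fin.ext hc)
        · intro habs
          exact absurd (Finset.mem_univ _) habs
      · apply Finset.sum_eq_zero
        intro r _
        rw [if_neg]
        intro hc
        exact h (hc ▸ r.isLt)
  have hMEdet : M.det = (M * E).det := by rw [Matrix.det_mul, hEdet, mul_one]
  -- last row of M * E
  have hlastval : ∀ j : Fin (s + 1), M (Fin.last s) j =
      x ^ (((i + n : ℕ) : ℤ) + s - j - n).toNat * P := by
    intro j
    show Scoef f ((K (Fin.last s) : ℤ) + ((Fin.last s : Fin (s+1)) : ℤ) - (j : ℤ)) = _
    rw [hK, Fin.snoc_last]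
    have hj : (j : ℕ) < s + 1 := j.isLt
    have hb : ((i + n : ℕ) : ℤ) + ((Fin.last s : Fin (s+1)) : ℤ) - (j : ℤ) =
        ((i + n : ℕ) : ℤ) + s - j := by simp
    rw [hb]
    exact hformZ _ (by have hj' : (j : ℕ) < s + 1 := j.isLt; push_cast; omega)
  have hlast0 : ∀ j : Fin (s + 1), (j : ℕ) < s → (M * E) (Fin.last s) j = 0 := by
    intro j hj
    rw [hME, dif_pos (by omega : (j : ℕ) + 1 < s + 1), hlastval, hlastval]
    have hc : ((⟨(j : ℕ) + 1, by omega⟩ : Fin (s + 1)) : ℤ) = (j : ℤ) + 1 := by simp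
    rw [hc]
    have hA : (((i + n : ℕ) : ℤ) + s - j - n).toNat =
        (((i + n : ℕ) : ℤ) + s - ((j : ℤ) + 1) - n).toNat + 1 := by
      have : (j : ℤ) < s := by exact_mod_cast hj
      push_cast
      omega
    rw [hA, pow_succ]
    ring
  have hdiag : (M * E) (Fin.last s) (Fin.last s) = x ^ i * P := by
    rw [hME, dif_neg (by rw [Fin.val_last]; omega), add_zero,
      hlastval]
    congr 2
    have : ((Fin.last s : Fin (s+1)) : ℤ) = (s : ℤ) := by simp
    rw [this]
    push_cast
    omega
  -- the minor
  have hminor : (M * E).submatrix (Fin.last s).succAbove (Fin.last s).succAbove =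
      Matrix.of fun p q : Fin s => Scoef g ((J p : ℤ) + (p : ℤ) - (q : ℤ)) := by
    ext p q
    rw [Fin.succAbove_last]
    simp only [Matrix.submatrix_apply]
    rw [hME, dif_pos (by simpa using q.isLt : ((Fin.castSucc q : Fin (s+1)) : ℕ) + 1 < s + 1)]
    have e1 : M (Fin.castSucc p) (Fin.castSucc q) = Scoef f ((J p : ℤ) + (p : ℤ) - (q : ℤ)) := by
      show Scoef f ((K (Fin.castSucc p) : ℤ) + _ - _) = _
      rw [hK, Fin.snoc_castSucc]
      norm_num
    have e2 : M (Fin.castSucc p) ⟨((Fin.castSucc q : Fin (s+1)) : ℕ) + 1, by simpa using q.isLt⟩ =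
        Scoef f ((J p : ℤ) + (p : ℤ) - (q : ℤ) - 1) := by
      show Scoef f ((K (Fin.castSucc p) : ℤ) + _ - _) = _
      rw [hK, Fin.snoc_castSucc]
      have : ((⟨((Fin.castSucc q : Fin (s+1)) : ℕ) + 1, by simpa using q.isLt⟩ : Fin (s+1)) : ℤ) =
          (q : ℤ) + 1 := by simp
      rw [this]
      norm_num
      ring_nf
    simp only [Matrix.of_apply]
    rw [e1, e2, hrec]
    ring
  -- Laplace expansion
  rw [hLHS, hMEdet, Matrix.det_succ_row (M * E) (Fin.last s)]
  rw [Finset.sum_eq_single (Fin.last s)]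
  · rw [hdiag, hminor]
    have hsign : (-1 : R) ^ ((Fin.last s : Fin (s+1)) + (Fin.last s : Fin (s+1)) : ℕ) = 1 := by
      have : Even (((Fin.last s : Fin (s+1)) : ℕ) + ((Fin.last s : Fin (s+1)) : ℕ)) :=
        ⟨_, rfl⟩
      exact this.neg_one_pow
    rw [hsign, one_mul]
    rfl
  · intro j _ hj
    have hjlt : (j : ℕ) < s := by
      have := j.isLt
      rcases Nat.lt_succ_iff_lt_or_eq.mp this with h | h
      · exact h
      · exact absurd (Fin.ext h) hj
    rw [hlast0 j hjlt]
    ring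
  · intro habs
    exact absurd (Finset.mem_univ _) habs

end Aux

/-- Factorization property (case `m = 1`): for a single variable `x`, an `n`-letter
alphabet `𝔹` and a partition `J = (j_1 ≤ … ≤ j_s)` with `j_s ≤ i + n`,
`S_{(j_1,…,j_s,i+n)}(x-𝔹) = x^i · ∏_{b∈𝔹}(x-b) · S_J(-𝔹)`. -/
theorem schur_factorization (n s : ℕ) (i : ℕ) (J : Fin s → ℕ) (hJ : Monotone J)
    (hJK : ∀ p, J p ≤ i + n)
    (f : PowerSeries (MvPolynomial (Option (Fin n)) ℤ))
    (hf :
      (1 - PowerSeries.C (MvPolynomial.X none) * PowerSeries.X) * f =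
        ∏ j : Fin n,
          (1 - PowerSeries.C (MvPolynomial.X (some j)) * PowerSeries.X)) :
    schurJT f (Fin.snoc J (i + n)) =
      (MvPolynomial.X none : MvPolynomial (Option (Fin n)) ℤ) ^ i *
        (∏ j : Fin n, (MvPolynomial.X none - MvPolynomial.X (some j))) *
        schurJT
          (∏ j : Fin n,
            (1 - PowerSeries.C (MvPolynomial.X (some j)) * PowerSeries.X)) J :=
  main_aux n s i J (MvPolynomial.X none) (fun j => MvPolynomial.X (some j)) f hf

end
end
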